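/- Let ℓ be a prime and let R be a commutative ring which is a ℤ_ℓ-algebra, free of rank 2 as a ℤ_ℓ-module, and reduced (equivalently, R is an order in a reduced quadratic ℚ_ℓ-algebra). Then there exist ω ∈ R and c, d ∈ ℤ_ℓ such that (1, ω) is a ℤ_ℓ-basis of R, ω² = c·ω + d·1, and one of the following holds: c = 0 and d ≠ 0; or ℓ = 2, c = 1, and d is either zero or a unit of ℤ₂. -/

import Mathlib

open Module Polynomial

section QuadRingHelpers

variable {p : ℕ} [Fact p.Prime] {R : Type*} [CommRing R] [Algebra ℤ_[p] R]

/-- In `ℤ_p`, an element not divisible by `p` is a unit. -/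
lemma my_unit_of_not_dvd {x : ℤ_[p]} (hx : ¬ (p : ℤ_[p]) ∣ x) : IsUnit x := by
  rw [PadicInt.isUnit_iff]
  rcases lt_or_eq_of_le (PadicInt.norm_le_one x) with h | h
  · exact absurd ((PadicInt.norm_lt_one_iff_dvd x).mp h) hx
  · exact h

/-- Hensel's lemma for the quadratic `x² = c·x + d` with `c` a unit and `p ∣ d`. -/
lemma my_root (c d : ℤ_[p]) (hc : ‖c‖ = 1) (hd : ‖d‖ < 1) :
    ∃ r : ℤ_[p], r * r = c * r + d := by
  set F : Polynomial ℤ_[p] := X ^ 2 - C c * X - C d with hF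
  have heval : F.eval 0 = -d := by simp [hF]
  have hderiv : F.derivative.eval 0 = -c := by
    simp [hF, derivative_X_pow]
  have hnorm : ‖F.eval 0‖ < ‖F.derivative.eval 0‖ ^ 2 := by
    rw [heval, hderiv, norm_neg, norm_neg, hc, one_pow]
    exact hd
  obtain ⟨r, hr, -⟩ := hensels_lemma hnorm
  refine ⟨r, ?_⟩
  have : r ^ 2 - c * r - d = 0 := by simpa [hF] using hr
  linear_combination this + sq r

variable [Module.Finite ℤ_[p] R]

/-- A spanning family indexed by `Fin 2` in a module with a `Fin 2`-basis is a basis. -/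
lemma my_basis_of_span (B : Basis (Fin 2) ℤ_[p] R) (w : Fin 2 → R)
    (hw : ∀ i, B i ∈ Submodule.span ℤ_[p] (Set.range w)) :
    ∃ B' : Basis (Fin 2) ℤ_[p] R, ∀ i, B' i = w i := by
  set f : R →ₗ[ℤ_[p]] R := B.constr ℕ w with hfdef
  have hfB : ∀ i, f (B i) = w i := fun i => B.constr_basis ℕ w i
  have hsurj : Function.Surjective f := by
    rw [← LinearMap.range_eq_top, ← top_le_iff, ← B.span_eq, Submodule.span_le]
    rintro x ⟨i, rfl⟩
    have hsub : Set.range w ⊆ (LinearMap.range f : Set R) := by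
      rintro y ⟨j, rfl⟩; exact ⟨B j, hfB j⟩
    exact Submodule.span_le.mpr hsub (hw i)
  have hinj := OrzechProperty.injective_of_surjective_endomorphism f hsurj
  exact ⟨B.map (LinearEquiv.ofBijective f ⟨hinj, hsurj⟩), fun i => hfB i⟩

/-- Change of basis `(e₀, e₁) ↦ (e₀, u • e₁ + t • e₀)` for a unit `u`. -/
lemma my_basis_change (B : Basis (Fin 2) ℤ_[p] R) (u : ℤ_[p]ˣ) (t : ℤ_[p]) :
    ∃ B' : Basis (Fin 2) ℤ_[p] R,
      B' 0 = B 0 ∧ B' 1 = (u : ℤ_[p]) • B 1 + t • B 0 := by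
  obtain ⟨B', hB'⟩ := my_basis_of_span B ![B 0, (u : ℤ_[p]) • B 1 + t • B 0] (by
    intro i
    set S := Submodule.span ℤ_[p] (Set.range ![B 0, (u : ℤ_[p]) • B 1 + t • B 0]) with hS
    have h0 : B 0 ∈ S := Submodule.subset_span ⟨0, rfl⟩
    have h1' : ((u : ℤ_[p]) • B 1 + t • B 0) ∈ S := Submodule.subset_span ⟨1, rfl⟩
    fin_cases i
    · exact h0
    · have h : B 1 = (↑u⁻¹ : ℤ_[p]) • (((u : ℤ_[p]) • B 1 + t • B 0) - t • B 0) := by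
        rw [add_sub_cancel_right, smul_smul, Units.inv_mul, one_smul]
      show B 1 ∈ S
      rw [h]
      exact Submodule.smul_mem _ _ (Submodule.sub_mem _ h1' (Submodule.smul_mem _ _ h0)))
  exact ⟨B', hB' 0, hB' 1⟩

/-- `1` is part of a `ℤ_p`-basis of a quadratic ring. -/
lemma my_one_basis [Module.Free ℤ_[p] R] (hrank : finrank ℤ_[p] R = 2) :
    ∃ B : Basis (Fin 2) ℤ_[p] R, B 0 = 1 := by
  obtain B₀ := finBasisOfFinrankEq ℤ_[p] R hrank
  have hone := B₀.sum_repr 1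
  rw [Fin.sum_univ_two] at hone
  set a := B₀.repr 1 0 with ha'
  set b := B₀.repr 1 1 with hb'
  have hab : IsUnit a ∨ IsUnit b := by
    by_contra hcon
    push_neg at hcon
    obtain ⟨ha, hb⟩ := hcon
    have hpa : (p : ℤ_[p]) ∣ a := by
      rw [← Ideal.mem_span_singleton, ← PadicInt.maximalIdeal_eq_span_p]
      exact ha
    have hpb : (p : ℤ_[p]) ∣ b := by
      rw [← Ideal.mem_span_singleton, ← PadicInt.maximalIdeal_eq_span_p]
      exact hb
    obtain ⟨a', haeq⟩ := hpa
    obtain ⟨b', hbeq⟩ := hpb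
    rw [haeq, hbeq] at hone
    set z := a' • B₀ 0 + b' • B₀ 1 with hz
    have h1 : (1 : R) = (p : ℤ_[p]) • z := by
      rw [← hone, hz, smul_add, smul_smul, smul_smul]
    have hN : ∀ r : R, r ∈ (Ideal.span {(p : ℤ_[p])} • ⊤ : Submodule ℤ_[p] R) := by
      intro r
      have hr : r = (p : ℤ_[p]) • (r * z) := by
        rw [← mul_smul_comm, ← h1, mul_one]
      rw [hr]
      exact Submodule.smul_mem_smul (Ideal.mem_span_singleton_self _) trivial
    have htop : (⊤ : Submodule ℤ_[p] R) = ⊥ := by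
      refine Submodule.eq_bot_of_le_smul_of_le_jacobson_bot (Ideal.span {(p : ℤ_[p])}) ⊤
        Module.Finite.fg_top (fun x _ => hN x) ?_
      rw [IsLocalRing.jacobson_eq_maximalIdeal ⊥ bot_ne_top]
      exact le_of_eq PadicInt.maximalIdeal_eq_span_p.symm
    have h10 : (1 : R) = 0 := by
      have := htop ▸ (Submodule.mem_top : (1 : R) ∈ ⊤)
      exact (Submodule.mem_bot _).mp this
    exact B₀.ne_zero 0 (by rw [← mul_one (B₀ 0), h10, mul_zero])
  rcases hab with ⟨ua, hua⟩ | ⟨ub, hub⟩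
  · rw [← hua] at hone
    obtain ⟨B, hB⟩ := my_basis_of_span B₀ ![(1 : R), B₀ 1] (by
      intro i
      set S := Submodule.span ℤ_[p] (Set.range ![(1 : R), B₀ 1]) with hS
      have h0 : (1 : R) ∈ S := Submodule.subset_span ⟨0, rfl⟩
      have h1 : B₀ 1 ∈ S := Submodule.subset_span ⟨1, rfl⟩
      fin_cases i
      · show B₀ 0 ∈ S
        have h : B₀ 0 = (↑ua⁻¹ : ℤ_[p]) • ((1 : R) - b • B₀ 1) := by
          rw [← hone, add_sub_cancel_right, smul_smul, Units.inv_mul, one_smul]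
        rw [h]
        exact Submodule.smul_mem _ _ (Submodule.sub_mem _ h0 (Submodule.smul_mem _ _ h1))
      · exact h1)
    exact ⟨B, hB 0⟩
  · rw [← hub] at hone
    obtain ⟨B, hB⟩ := my_basis_of_span B₀ ![(1 : R), B₀ 0] (by
      intro i
      set S := Submodule.span ℤ_[p] (Set.range ![(1 : R), B₀ 0]) with hS
      have h0 : (1 : R) ∈ S := Submodule.subset_span ⟨0, rfl⟩
      have h1 : B₀ 0 ∈ S := Submodule.subset_span ⟨1, rfl⟩
      fin_cases i
      · exact h1
      · show B₀ 1 ∈ S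
        have h : B₀ 1 = (↑ub⁻¹ : ℤ_[p]) • ((1 : R) - a • B₀ 0) := by
          rw [← hone, add_sub_cancel_left, smul_smul, Units.inv_mul, one_smul]
        rw [h]
        exact Submodule.smul_mem _ _ (Submodule.sub_mem _ h0 (Submodule.smul_mem _ _ h1)))
    exact ⟨B, hB 0⟩

end QuadRingHelpers

/-- classification of quadratic rings over `ℤ_p`: every reduced quadratic
ring over `ℤ_p` has a basis `(1, ω)` with `ω² = c·ω + d·1` and normalized parameters. -/
theorem quadratic_ring_normalized_basis
    (p : ℕ) [Fact p.Prime] (R : Type*) [CommRing R] [Algebra ℤ_[p] R]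
    [Module.Free ℤ_[p] R] (hrank : Module.finrank ℤ_[p] R = 2) [IsReduced R] :
    ∃ (ω : R) (c d : ℤ_[p]) (B : Basis (Fin 2) ℤ_[p] R),
      B 0 = 1 ∧ B 1 = ω ∧
      ω ^ 2 = algebraMap ℤ_[p] R c * ω + algebraMap ℤ_[p] R d ∧
      ((c = 0 ∧ d ≠ 0) ∨ (p = 2 ∧ c = 1 ∧ (d = 0 ∨ IsUnit d))) := by
  haveI : Module.Finite ℤ_[p] R := Module.finite_of_finrank_pos (by omega)
  obtain ⟨B₁, h0⟩ := my_one_basis hrank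
  set φ : ℤ_[p] →+* R := algebraMap ℤ_[p] R with hφ
  set ω₀ := B₁ 1 with hω₀def
  -- structure constants
  have hrep := B₁.sum_repr (ω₀ ^ 2)
  rw [Fin.sum_univ_two, h0] at hrep
  set c₀ := B₁.repr (ω₀ ^ 2) 1 with hc₀def
  set d₀ := B₁.repr (ω₀ ^ 2) 0 with hd₀def
  have hsq : ω₀ ^ 2 = φ c₀ * ω₀ + φ d₀ := by
    conv_lhs => rw [← hrep]
    rw [Algebra.smul_def, Algebra.smul_def, mul_one, add_comm]
  -- nonvanishing of ω₀ - φ t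
  have hω0 : ∀ t : ℤ_[p], ω₀ - φ t ≠ 0 := by
    intro t h
    have heq : B₁ 1 = t • B₁ 0 := by
      rw [h0, Algebra.smul_def, mul_one, ← sub_eq_zero]
      exact h
    have h1 := congrArg (fun x => B₁.repr x 1) heq
    simp [Basis.repr_self, Finsupp.single_apply] at h1
  by_cases h2 : (2 : ℤ_[p]) ∣ c₀
  · -- can complete the square: c = 0
    obtain ⟨t, hct⟩ := h2
    obtain ⟨B₂, hB20, hB21⟩ := my_basis_change B₁ 1 (-t)
    refine ⟨ω₀ - φ t, 0, d₀ + t * t, B₂, by rw [hB20, h0], ?_, ?_, ?_⟩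
    · rw [hB21, h0, Units.val_one, one_smul, neg_smul, Algebra.smul_def, mul_one,
        ← sub_eq_add_neg]
    · have e1 : φ c₀ = 2 * φ t := by rw [hct, map_mul, map_ofNat]
      have e2 : (ω₀ - φ t) ^ 2 = (φ c₀ * ω₀ + φ d₀) - 2 * φ t * ω₀ + φ t * φ t := by
        rw [← hsq]; ring
      rw [e2, e1, map_zero, map_add, map_mul]
      ring
    · refine Or.inl ⟨rfl, fun hd0 => hω0 t ?_⟩
      have hnil : (ω₀ - φ t) ^ 2 = 0 := by
        have e1 : φ c₀ = 2 * φ t := by rw [hct, map_mul, map_ofNat]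
        have e2 : (ω₀ - φ t) ^ 2 = (φ c₀ * ω₀ + φ d₀) - 2 * φ t * ω₀ + φ t * φ t := by
          rw [← hsq]; ring
        have e3 : φ d₀ = - (φ t * φ t) := by
          rw [← map_mul, ← map_neg]
          exact congrArg φ (by linear_combination hd0)
        rw [e2, e1, e3]; ring
      exact IsNilpotent.eq_zero ⟨2, hnil⟩
  · -- p = 2 and c₀ is a unit
    have hp2 : p = 2 := by
      by_contra hp
      refine h2 (IsUnit.dvd ?_)
      apply my_unit_of_not_dvd
      intro hdvd
      have : ‖(2 : ℤ_[p])‖ < 1 := (PadicInt.norm_lt_one_iff_dvd _).mpr hdvd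
      rw [show ((2 : ℤ_[p])) = ((2 : ℤ) : ℤ_[p]) by norm_cast] at this
      rw [PadicInt.norm_int_lt_one_iff_dvd] at this
      have hple : p ∣ 2 := Int.ofNat_dvd.mp (by exact_mod_cast this)
      exact hp ((Nat.prime_dvd_prime_iff_eq (Fact.out : p.Prime) Nat.prime_two).mp hple)
    have hpcast : ((p : ℤ_[p])) = 2 := by
      have := congrArg (fun n : ℕ => (n : ℤ_[p])) hp2
      simpa using this
    have hcu : IsUnit c₀ := my_unit_of_not_dvd (by rw [hpcast]; exact h2)
    obtain ⟨uc, huc⟩ := hcu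
    by_cases hd2 : (2 : ℤ_[p]) ∣ d₀
    · -- Hensel: root exists, idempotent normalization, d = 0
      have hcnorm : ‖c₀‖ = 1 := PadicInt.isUnit_iff.mp ⟨uc, huc⟩
      have hdnorm : ‖d₀‖ < 1 := (PadicInt.norm_lt_one_iff_dvd _).mpr (by rw [hpcast]; exact hd2)
      obtain ⟨r, hr⟩ := my_root c₀ d₀ hcnorm hdnorm
      set s := c₀ - 2 * r with hsdef
      have hsu : IsUnit s := by
        apply my_unit_of_not_dvd
        rw [hpcast]
        intro hdvds
        exact h2 (by
          have : c₀ = s + 2 * r := by rw [hsdef]; ring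
          rw [this]
          exact dvd_add hdvds ⟨r, rfl⟩)
      obtain ⟨us, hus⟩ := hsu
      set v : ℤ_[p] := ↑us⁻¹ with hvdef
      have hvs : v * s = 1 := by rw [hvdef, ← hus, Units.inv_mul]
      obtain ⟨B₂, hB20, hB21⟩ := my_basis_change B₁ us⁻¹ (-(v * r))
      refine ⟨φ v * ω₀ - φ (v * r), 1, 0, B₂, by rw [hB20, h0], ?_, ?_, Or.inr ⟨hp2, rfl, Or.inl rfl⟩⟩
      · rw [hB21, h0, Algebra.smul_def, Algebra.smul_def, mul_one, map_neg, ← sub_eq_add_neg]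
      · have hωeq : φ v * ω₀ - φ (v * r) = φ v * (ω₀ - φ r) := by
          rw [mul_sub, map_mul]
        have hz2 : φ r * φ r - φ c₀ * φ r - φ d₀ = 0 := by
          rw [← map_mul, ← map_mul, ← map_sub, ← map_sub,
            show r * r - c₀ * r - d₀ = 0 by linear_combination hr, map_zero]
        have claim1 : ω₀ ^ 2 - 2 * φ r * ω₀ + φ r * φ r = φ s * (ω₀ - φ r) := by
          have hφs : φ s = φ c₀ - 2 * φ r := by
            rw [hsdef, map_sub, map_mul, map_ofNat]
          rw [hsq, hφs]
          linear_combination -hz2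
        rw [map_one, one_mul, map_zero, add_zero, hωeq]
        calc (φ v * (ω₀ - φ r)) ^ 2
            = φ v * φ v * (ω₀ ^ 2 - 2 * φ r * ω₀ + φ r * φ r) := by ring
          _ = φ v * φ v * (φ s * (ω₀ - φ r)) := by rw [claim1]
          _ = φ (v * s) * (φ v * (ω₀ - φ r)) := by rw [map_mul]; ring
          _ = φ v * (ω₀ - φ r) := by rw [hvs, map_one, one_mul]
    · -- d₀ odd: rescale by c₀⁻¹, d is a unit
      have hdu : IsUnit d₀ := my_unit_of_not_dvd (by rw [hpcast]; exact hd2)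
      set v : ℤ_[p] := ↑uc⁻¹ with hvdef
      have hvc : v * c₀ = 1 := by rw [hvdef, ← huc, Units.inv_mul]
      obtain ⟨B₂, hB20, hB21⟩ := my_basis_change B₁ uc⁻¹ 0
      have hdunit : IsUnit (v ^ 2 * d₀) := by
        have hvp : v ^ 2 = ((uc⁻¹ ^ 2 : ℤ_[p]ˣ) : ℤ_[p]) := by
          rw [Units.val_pow_eq_pow_val, hvdef]
        rw [hvp]
        exact (uc⁻¹ ^ 2).isUnit.mul hdu
      refine ⟨φ v * ω₀, 1, v ^ 2 * d₀, B₂, by rw [hB20, h0], ?_, ?_,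
        Or.inr ⟨hp2, rfl, Or.inr hdunit⟩⟩
      · rw [hB21, h0, zero_smul, add_zero, Algebra.smul_def]
      · have h1 : φ (v * c₀) = 1 := by rw [hvc, map_one]
        have e : (φ v * ω₀) ^ 2 = φ (v * c₀) * (φ v * ω₀) + φ (v ^ 2 * d₀) := by
          simp only [map_mul, map_pow]
          rw [mul_pow, hsq]
          ring
        rw [e, h1, map_one, one_mul]
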